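/- arXiv:2401.03042 — 2 statements merged into one kernel-verified Lean document; each statement's English description precedes it below -/
import Mathlib

section
/- Every k-atom A_k on n vertices satisfies λ₁(A_k) ≥ k√k/(4√n) − 2, where λ₁(A_k) is the largest eigenvalue of the adjacency matrix of A_k. -/
/-- `IsKAtom k G` : the graph `G` is a `k`-atom.  `K₁` is the only `1`-atom, and a
`(k+1)`-atom is partitioned into an independent set `I = Aᶜ` and a set `A` inducing a
`k`-atom, such that every vertex of `A` has exactly one neighbor in `I` and every
vertex of `I` has at least one neighbor in `A`. -/
inductive IsKAtom : (k : ℕ) → {V : Type} → SimpleGraph V → Prop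
  | base {V : Type} (G : SimpleGraph V) (h1 : Nonempty V) (h2 : Subsingleton V) :
      IsKAtom 1 G
  | step {V : Type} (G : SimpleGraph V) (k : ℕ) (A : Set V)
      (hA : IsKAtom k (G.induce A))
      (hI : ∀ u v : V, u ∉ A → v ∉ A → ¬ G.Adj u v)
      (hone : ∀ a ∈ A, ∃! b : V, b ∉ A ∧ G.Adj a b)
      (hcov : ∀ b : V, b ∉ A → ∃ a ∈ A, G.Adj a b) :
      IsKAtom (k + 1) G

open scoped Matrix in
/-- `lambda1 G` : the largest eigenvalue of the adjacency matrix of `G`. -/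
noncomputable def lambda1 {V : Type} [Fintype V] (G : SimpleGraph V) : ℝ :=
  letI := Classical.decRel G.Adj
  sSup {x : ℝ | ∃ v : V → ℝ, v ≠ 0 ∧ G.adjMatrix ℝ *ᵥ v = x • v}

open Matrix Finset

variable {V : Type} [Fintype V]

lemma quad_le (G : SimpleGraph V) [DecidableRel G.Adj] (y : V → ℝ) :
    (G.adjMatrix ℝ *ᵥ y) ⬝ᵥ y ≤ (Fintype.card V : ℝ) * (y ⬝ᵥ y) := by
  have h1 : (G.adjMatrix ℝ *ᵥ y) ⬝ᵥ y
      = ∑ u : V, ∑ v : V, (if G.Adj u v then (1:ℝ) else 0) * y v * y u := by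
    simp [dotProduct, mulVec, Finset.sum_mul]
  rw [h1]
  have h2 : ∀ u v : V, (if G.Adj u v then (1:ℝ) else 0) * y v * y u
      ≤ (y u ^ 2 + y v ^ 2) / 2 := by
    intro u v
    by_cases h : G.Adj u v <;> simp [h] <;> nlinarith [sq_nonneg (y u - y v), sq_nonneg (y u + y v)]
  have h3 : ∀ u : V, ∑ v : V, (y u ^ 2 + y v ^ 2) / 2
      = ((Fintype.card V : ℝ) * y u ^ 2 + ∑ v : V, y v ^ 2) / 2 := by
    intro u
    rw [← Finset.sum_div, Finset.sum_add_distrib, Finset.sum_const, Finset.card_univ,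
      nsmul_eq_mul]
  have h4 : y ⬝ᵥ y = ∑ v : V, y v ^ 2 := by
    simp [dotProduct, sq]
  calc ∑ u : V, ∑ v : V, (if G.Adj u v then (1:ℝ) else 0) * y v * y u
      ≤ ∑ u : V, ∑ v : V, (y u ^ 2 + y v ^ 2) / 2 :=
        Finset.sum_le_sum fun u _ => Finset.sum_le_sum fun v _ => h2 u v
    _ = (Fintype.card V : ℝ) * (y ⬝ᵥ y) := by
        rw [Finset.sum_congr rfl fun u _ => h3 u, h4]
        rw [← Finset.sum_div, Finset.sum_add_distrib, ← Finset.mul_sum, Finset.sum_const,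
          Finset.card_univ, nsmul_eq_mul]
        ring

lemma dot_self_pos {y : V → ℝ} (hy : y ≠ 0) : 0 < y ⬝ᵥ y := by
  have h4 : y ⬝ᵥ y = ∑ v : V, y v ^ 2 := by simp [dotProduct, sq]
  rw [h4]
  obtain ⟨i, hi⟩ : ∃ i, y i ≠ 0 := by
    by_contra hc
    push_neg at hc
    exact hy (funext hc)
  exact Finset.sum_pos' (fun j _ => sq_nonneg _) ⟨i, Finset.mem_univ i, by positivity⟩

lemma bddAbove_eig (G : SimpleGraph V) [DecidableRel G.Adj] :
    BddAbove {x : ℝ | ∃ v : V → ℝ, v ≠ 0 ∧ G.adjMatrix ℝ *ᵥ v = x • v} := by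
  refine ⟨(Fintype.card V : ℝ), fun x hx => ?_⟩
  obtain ⟨v, hv0, hveq⟩ := hx
  have h1 : (G.adjMatrix ℝ *ᵥ v) ⬝ᵥ v = x * (v ⬝ᵥ v) := by
    rw [hveq, smul_dotProduct]; rfl
  have h2 := quad_le G v
  rw [h1] at h2
  have h3 := dot_self_pos hv0
  exact le_of_mul_le_mul_right h2 h3

lemma rayleigh_le_lambda1 (G : SimpleGraph V) [DecidableRel G.Adj] (x : V → ℝ) (hx : x ≠ 0) :
    (G.adjMatrix ℝ *ᵥ x) ⬝ᵥ x ≤ lambda1 G * (x ⬝ᵥ x) := by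
  classical
  have hne : Nonempty V := by
    by_contra hc
    rw [not_nonempty_iff] at hc
    exact hx (funext fun i => (hc.false i).elim)
  set A : Matrix V V ℝ := G.adjMatrix ℝ with hA
  have hherm : A.IsHermitian := by
    ext i j
    simp [Matrix.conjTranspose_apply, SimpleGraph.adj_comm, hA]
  have hsym : A.toEuclideanLin.IsSymmetric := Matrix.isHermitian_iff_isSymmetric.mp hherm
  -- EuclideanSpace ℝ V is defeq to V → ℝ as a type
  set x' : EuclideanSpace ℝ V := (WithLp.equiv 2 (V → ℝ)).symm x with hx'def
  have hx' : x' ≠ 0 := by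
    simp only [hx'def, ne_eq, EmbeddingLike.map_eq_zero_iff]
    exact fun hc => hx (by simpa using congrArg (WithLp.equiv 2 (V → ℝ)) hc)
  haveI : Nontrivial (EuclideanSpace ℝ V) := ⟨x', 0, hx'⟩
  have hev := hsym.hasEigenvalue_iSup_of_finiteDimensional
  set μ : ℝ := ⨆ z : {z : EuclideanSpace ℝ V // z ≠ 0},
      RCLike.re (inner ℝ (A.toEuclideanLin ↑z) (↑z : EuclideanSpace ℝ V) : ℝ)
        / ‖(↑z : EuclideanSpace ℝ V)‖ ^ 2 with hmu
  obtain ⟨v, hvv⟩ := hev.exists_hasEigenvector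
  have heq : A.toEuclideanLin v = μ • v := by
    have := Module.End.mem_eigenspace_iff.mp hvv.1
    rwa [RCLike.ofReal_real_eq_id, id_eq] at this
  have hv0 : v ≠ 0 := hvv.2
  -- translate to mulVec
  set w : V → ℝ := WithLp.equiv 2 (V → ℝ) v with hw
  have hw0 : w ≠ 0 := by
    simp only [hw, ne_eq, EmbeddingLike.map_eq_zero_iff]
    exact fun hc => hv0 (by simpa using congrArg (WithLp.equiv 2 (V → ℝ)).symm hc)
  have hweq : A *ᵥ w = μ • w := by
    have h1 := congrArg (WithLp.equiv 2 (V → ℝ)) heq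
    rw [Matrix.toEuclideanLin_apply] at h1
    simp at h1
    exact h1
  have hμmem : μ ∈ {x : ℝ | ∃ v : V → ℝ, v ≠ 0 ∧ G.adjMatrix ℝ *ᵥ v = x • v} :=
    ⟨w, hw0, hweq⟩
  have hinst : (Classical.decRel G.Adj : DecidableRel G.Adj) = ‹DecidableRel G.Adj› :=
    Subsingleton.elim _ _
  have hμle : μ ≤ lambda1 G := by
    unfold lambda1
    rw [hinst]
    exact le_csSup (bddAbove_eig G) hμmem
  have hinner : ∀ z : EuclideanSpace ℝ V,
      (inner ℝ (A.toEuclideanLin z) z : ℝ)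
        = (A *ᵥ (WithLp.equiv 2 (V → ℝ) z)) ⬝ᵥ (WithLp.equiv 2 (V → ℝ) z) := by
    intro z
    rw [Matrix.toEuclideanLin_apply]
    simp [PiLp.inner_apply, dotProduct, mul_comm]
  have hnorm : ∀ z : EuclideanSpace ℝ V,
      ‖z‖ ^ 2 = (WithLp.equiv 2 (V → ℝ) z) ⬝ᵥ (WithLp.equiv 2 (V → ℝ) z) := by
    intro z
    rw [EuclideanSpace.norm_sq_eq]
    simp only [Real.norm_eq_abs, sq_abs, sq, dotProduct]
    simp [abs_mul_abs_self]
  have hbdd2 : BddAbove (Set.range fun z : {z : EuclideanSpace ℝ V // z ≠ 0} =>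
      RCLike.re (inner ℝ (A.toEuclideanLin ↑z) (↑z : EuclideanSpace ℝ V) : ℝ)
        / ‖(↑z : EuclideanSpace ℝ V)‖ ^ 2) := by
    refine ⟨(Fintype.card V : ℝ), ?_⟩
    rintro r ⟨z, rfl⟩
    have h2 : (0:ℝ) < ‖(↑z : EuclideanSpace ℝ V)‖ ^ 2 := by
      have := norm_pos_iff.mpr z.2
      positivity
    rw [div_le_iff₀ h2]
    have h1 := quad_le G (WithLp.equiv 2 (V → ℝ) ↑z)
    simp only [RCLike.re_to_real]
    rw [hinner, hnorm]
    exact h1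
  have hxq : ((A *ᵥ x) ⬝ᵥ x) / (x ⬝ᵥ x) ≤ μ := by
    have h := le_ciSup hbdd2 (⟨x', hx'⟩ : {z : EuclideanSpace ℝ V // z ≠ 0})
    simp only [RCLike.re_to_real] at h
    rw [hinner, hnorm] at h
    have hxx : WithLp.equiv 2 (V → ℝ) x' = x := by
      rw [hx'def]
      simp
    rw [hxx] at h
    exact h
  have hdot : 0 < x ⬝ᵥ x := dot_self_pos hx
  calc (A *ᵥ x) ⬝ᵥ x = ((A *ᵥ x) ⬝ᵥ x / (x ⬝ᵥ x)) * (x ⬝ᵥ x) := by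
        field_simp
    _ ≤ μ * (x ⬝ᵥ x) := by
        exact mul_le_mul_of_nonneg_right hxq hdot.le
    _ ≤ lambda1 G * (x ⬝ᵥ x) := mul_le_mul_of_nonneg_right hμle hdot.le

open scoped Classical in
/-- Twice the number of edges inside `S` (number of ordered adjacent pairs in `S`). -/
noncomputable def Qr {V : Type} (G : SimpleGraph V) (S : Finset V) : ℝ :=
  ∑ u ∈ S, ∑ v ∈ S, if G.Adj u v then (1:ℝ) else 0

lemma Qr_nonneg {V : Type} (G : SimpleGraph V) (S : Finset V) : 0 ≤ Qr G S := by
  classical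
  unfold Qr
  refine Finset.sum_nonneg fun u _ => Finset.sum_nonneg fun v _ => ?_
  split <;> norm_num

lemma Qr_le_lambda1 (G : SimpleGraph V) (S : Finset V) (hS : S.Nonempty) :
    Qr G S ≤ lambda1 G * S.card := by
  classical
  set x : V → ℝ := fun v => if v ∈ S then (1:ℝ) else 0 with hxdef
  have hx : x ≠ 0 := by
    obtain ⟨s, hs⟩ := hS
    intro hc
    have : x s = 0 := by rw [hc]; rfl
    simp [hxdef, hs] at this
  have key := rayleigh_le_lambda1 G x hx
  have hsum : ∀ f : V → ℝ, ∑ u : V, f u * x u = ∑ u ∈ S, f u := by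
    intro f
    simp only [hxdef, mul_ite, mul_one, mul_zero]
    rw [Finset.sum_ite_mem, Finset.univ_inter]
  have h1 : (G.adjMatrix ℝ *ᵥ x) ⬝ᵥ x = Qr G S := by
    rw [dotProduct, hsum]
    unfold Qr
    refine Finset.sum_congr rfl fun u _ => ?_
    rw [mulVec, dotProduct, hsum]
    refine Finset.sum_congr rfl fun v _ => ?_
    simp
  have h2 : x ⬝ᵥ x = (S.card : ℝ) := by
    rw [dotProduct, hsum]
    simp [hxdef]
  rw [h1, h2] at key
  exact key

lemma Qr_image {V : Type} [DecidableEq V] (G : SimpleGraph V) (A : Set V) (T : Finset ↥A) :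
    Qr G (T.image Subtype.val) = Qr (G.induce A) T := by
  classical
  unfold Qr
  rw [Finset.sum_image (fun a _ b _ h => Subtype.val_injective h)]
  refine Finset.sum_congr rfl fun a _ => ?_
  rw [Finset.sum_image (fun a _ b _ h => Subtype.val_injective h)]
  refine Finset.sum_congr rfl fun b _ => ?_
  simp [SimpleGraph.comap_adj]

lemma IsKAtom.one_le {k : ℕ} {V : Type} {G : SimpleGraph V} (h : IsKAtom k G) : 1 ≤ k := by
  induction h <;> omega

theorem atom_chain : ∀ {k : ℕ} {V : Type} {G : SimpleGraph V}, IsKAtom k G →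
    ∀ (inst : Fintype V),
    ∃ S : ℕ → Finset V,
      S k = @Finset.univ V inst ∧
      (S 1).card = 1 ∧
      (∀ j, 1 ≤ j → j < k → (S j).card + 1 ≤ (S (j+1)).card ∧ (S (j+1)).card ≤ 2 * (S j).card) ∧
      (∀ m, 1 ≤ m → m ≤ k → 2 * (∑ j ∈ Finset.Ico 1 m, ((S j).card : ℝ)) ≤ Qr G (S m)) := by
  intro k₀ V₀ G₀ h
  induction h with
  | @base V G h1 h2 =>
    intro inst
    refine ⟨fun _ => Finset.univ, rfl, ?_, by omega, ?_⟩
    · rw [Finset.card_univ]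
      exact Fintype.card_eq_one_iff.mpr ⟨h1.some, fun y => Subsingleton.elim y h1.some⟩
    · intro m hm1 hm2
      have : m = 1 := by omega
      subst this
      simpa using Qr_nonneg G Finset.univ
  | @step V G k A hA hI hone hcov ih =>
    intro inst
    classical
    have hk1 : 1 ≤ k := hA.one_le
    letI instA : Fintype ↥A := A.toFinite.fintype
    obtain ⟨SA, hSAtop, hSA1, hSAmono, hSAQ⟩ := ih instA
    -- the outside-neighbor function
    have hchoice : ∀ a : ↥A, ∃ b : V, (b ∉ A ∧ G.Adj ↑a b) ∧ ∀ y, (y ∉ A ∧ G.Adj ↑a y) → y = b :=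
      fun a => hone ↑a a.2
    choose f hf1 hf2 using hchoice
    -- basic finsets
    set AF : Finset V := (SA k).image Subtype.val with hAFdef
    have hAFmem : ∀ v : V, v ∈ AF ↔ v ∈ A := by
      intro v
      simp only [hAFdef, Finset.mem_image, hSAtop]
      constructor
      · rintro ⟨a, _, rfl⟩; exact a.2
      · intro hv; exact ⟨⟨v, hv⟩, Finset.mem_univ _, rfl⟩
    set S : ℕ → Finset V := fun j => if j ≤ k then (SA j).image Subtype.val else Finset.univ
      with hSdef
    have hScard : ∀ j, j ≤ k → (S j).card = (SA j).card := by
      intro j hj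
      simp only [hSdef, if_pos hj]
      exact Finset.card_image_of_injective _ Subtype.val_injective
    have hSk : S k = AF := by simp [hSdef, hAFdef]
    -- A is nonempty, complement is nonempty
    have hAne : ∃ a : ↥A, True := by
      have : (SA 1).Nonempty := Finset.card_pos.mp (by omega)
      exact ⟨this.choose, trivial⟩
    obtain ⟨a₀, -⟩ := hAne
    have hfa₀ : f a₀ ∉ A := (hf1 a₀).1
    -- surjection from A onto the complement
    have hsurj : ∀ b : V, b ∉ A → ∃ a : ↥A, f a = b := by
      intro b hb
      obtain ⟨a, ha, hadj⟩ := hcov b hb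
      exact ⟨⟨a, ha⟩, (hf2 ⟨a, ha⟩ b ⟨hb, hadj⟩).symm⟩
    -- cardinality facts
    have hcard_compl_le : Fintype.card {v : V // v ∉ A} ≤ (SA k).card := by
      have : (SA k).card = Fintype.card ↥A := by rw [hSAtop, Finset.card_univ]
      rw [this]
      have hsurj' : Function.Surjective
          (fun a : ↥A => (⟨f a, (hf1 a).1⟩ : {v : V // v ∉ A})) := by
        rintro ⟨b, hb⟩
        obtain ⟨a, ha⟩ := hsurj b hb
        exact ⟨a, Subtype.ext ha⟩
      exact Fintype.card_le_of_surjective _ hsurj'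
    have e1 : Fintype.card {v : V // v ∉ A} = Fintype.card V - Fintype.card {v : V // v ∈ A} :=
      Fintype.card_subtype_compl _
    have e2 : Fintype.card {v : V // v ∈ A} ≤ Fintype.card V :=
      Fintype.card_le_of_injective Subtype.val Subtype.val_injective
    have e3 : Fintype.card {v : V // v ∈ A} = Fintype.card ↥A := Fintype.card_congr (Equiv.refl _)
    have hcard_split : Fintype.card V = Fintype.card ↥A + Fintype.card {v : V // v ∉ A} := by
      omega
    have hcard_univ_le : (Finset.univ : Finset V).card ≤ 2 * (SA k).card := by
      rw [Finset.card_univ, hcard_split]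
      have : Fintype.card ↥A = (SA k).card := by rw [hSAtop, Finset.card_univ]
      omega
    have hcard_univ_ge : (SA k).card + 1 ≤ (Finset.univ : Finset V).card := by
      rw [Finset.card_univ, hcard_split]
      have h1 : Fintype.card ↥A = (SA k).card := by rw [hSAtop, Finset.card_univ]
      have h2 : 1 ≤ Fintype.card {v : V // v ∉ A} := by
        have : Nonempty {v : V // v ∉ A} := ⟨⟨f a₀, hfa₀⟩⟩
        exact Fintype.card_pos
      omega
    refine ⟨S, ?_, ?_, ?_, ?_⟩
    · simp [hSdef]
    · rw [hScard 1 hk1]; exact hSA1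
    · intro j hj1 hjk1
      by_cases hjk : j + 1 ≤ k
      · rw [hScard j (by omega), hScard (j+1) hjk]
        exact hSAmono j hj1 (by omega)
      · have hj : j = k := by omega
        rw [hj, hScard k le_rfl]
        have h5 : S (k+1) = Finset.univ := by simp [hSdef]
        rw [h5]
        exact ⟨hcard_univ_ge, hcard_univ_le⟩
    · intro m hm1 hmk
      by_cases hmk' : m ≤ k
      · have hSm : S m = (SA m).image Subtype.val := by simp [hSdef, hmk']
        rw [hSm, Qr_image]
        have hsumeq : ∑ j ∈ Finset.Ico 1 m, ((S j).card : ℝ)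
            = ∑ j ∈ Finset.Ico 1 m, ((SA j).card : ℝ) := by
          refine Finset.sum_congr rfl fun j hj => ?_
          have := Finset.mem_Ico.mp hj
          rw [hScard j (by omega)]
        rw [hsumeq]
        exact hSAQ m hm1 hmk'
      · -- m = k + 1 : the top level
        have hm : m = k + 1 := by omega
        subst hm
        have hStop : S (k+1) = Finset.univ := by simp [hSdef]
        rw [hStop]
        set F : V → V → ℝ := fun u v => if G.Adj u v then (1:ℝ) else 0 with hFdef
        have hQuniv : Qr G Finset.univ = ∑ u : V, ∑ v : V, F u v := by
          unfold Qr
          refine Finset.sum_congr rfl fun u _ => Finset.sum_congr rfl fun v _ => ?_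
          by_cases h : G.Adj u v <;> simp [h, hFdef]
        have hQAF : Qr G AF = ∑ u ∈ AF, ∑ v ∈ AF, F u v := by
          unfold Qr
          refine Finset.sum_congr rfl fun u _ => Finset.sum_congr rfl fun v _ => ?_
          by_cases h : G.Adj u v <;> simp [h, hFdef]
        have hsplit : ∀ g : V → ℝ, ∑ v : V, g v = ∑ v ∈ AF, g v + ∑ v ∈ AFᶜ, g v :=
          fun g => (Finset.sum_add_sum_compl AF g).symm
        have hrow : ∀ u, u ∈ A → ∑ v ∈ AFᶜ, F u v = 1 := by
          intro u hu
          obtain ⟨b, ⟨hbA, hbadj⟩, hbuniq⟩ := hone u hu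
          have hbmem : b ∈ AFᶜ := by
            rw [Finset.mem_compl, hAFmem]
            exact hbA
          rw [Finset.sum_eq_single_of_mem b hbmem]
          · simp [hFdef, hbadj]
          · intro c hc hcb
            have hcA : c ∉ A := by
              rw [Finset.mem_compl, hAFmem] at hc
              exact hc
            by_cases hadj : G.Adj u c
            · exact absurd (hbuniq c ⟨hcA, hadj⟩) hcb
            · simp [hFdef, hadj]
        have hzero : ∀ u ∈ AFᶜ, ∑ v ∈ AFᶜ, F u v = 0 := by
          intro u hu
          refine Finset.sum_eq_zero fun v hv => ?_
          rw [Finset.mem_compl, hAFmem] at hu hv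
          simp [hFdef, hI u v hu hv]
        have hcross : ∑ u ∈ AFᶜ, ∑ v ∈ AF, F u v = ∑ u ∈ AF, ∑ v ∈ AFᶜ, F u v := by
          rw [Finset.sum_comm]
          refine Finset.sum_congr rfl fun u _ => Finset.sum_congr rfl fun v _ => ?_
          simp only [hFdef]
          rw [SimpleGraph.adj_comm]
        have hAFcard : ∑ u ∈ AF, (1:ℝ) = (AF.card : ℝ) := by simp
        have hmain : Qr G Finset.univ = Qr G AF + 2 * (AF.card : ℝ) := by
          rw [hQuniv, hsplit (fun u => ∑ v : V, F u v)]
          have e1 : ∑ u ∈ AF, ∑ v : V, F u v = Qr G AF + (AF.card : ℝ) := by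
            rw [hQAF, ← hAFcard, ← Finset.sum_add_distrib]
            refine Finset.sum_congr rfl fun u hu => ?_
            rw [hsplit (F u), hrow u ((hAFmem u).mp hu)]
          have e2 : ∑ u ∈ AFᶜ, ∑ v : V, F u v = (AF.card : ℝ) := by
            have : ∀ u ∈ AFᶜ, ∑ v : V, F u v = ∑ v ∈ AF, F u v := by
              intro u hu
              rw [hsplit (F u), hzero u hu, add_zero]
            rw [Finset.sum_congr rfl this, hcross, ← hAFcard]
            refine Finset.sum_congr rfl fun u hu => ?_
            exact hrow u ((hAFmem u).mp hu)
          rw [e1, e2]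
          ring
        -- assemble
        have hQA : 2 * (∑ j ∈ Finset.Ico 1 k, ((SA j).card : ℝ)) ≤ Qr (G.induce A) (SA k) :=
          hSAQ k hk1 le_rfl
        have hQimg : Qr (G.induce A) (SA k) = Qr G AF := by
          rw [hAFdef, Qr_image]
        have hsum_eq : ∑ j ∈ Finset.Ico 1 k, ((S j).card : ℝ)
            = ∑ j ∈ Finset.Ico 1 k, ((SA j).card : ℝ) := by
          refine Finset.sum_congr rfl fun j hj => ?_
          have := Finset.mem_Ico.mp hj
          rw [hScard j (by omega)]
        have hcards : ((S k).card : ℝ) = (AF.card : ℝ) := by rw [hSk]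
        have htop : ∑ j ∈ Finset.Ico 1 (k+1), ((S j).card : ℝ)
            = ∑ j ∈ Finset.Ico 1 k, ((S j).card : ℝ) + ((S k).card : ℝ) :=
          Finset.sum_Ico_succ_top hk1 _
        rw [htop, hsum_eq, hcards, hmain, ← hQimg]
        linarith

lemma gauss_cast (m : ℕ) : ∑ j ∈ Finset.Ico 1 m, (j:ℝ) = m * (m - 1) / 2 := by
  induction m with
  | zero => simp
  | succ n ihn =>
    rcases Nat.eq_zero_or_pos n with h0 | h0
    · subst h0; simp
    · rw [Finset.sum_Ico_succ_top (by omega), ihn]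
      push_cast
      ring

set_option maxHeartbeats 1000000 in
/-- Every `k`-atom on `n` vertices satisfies `λ₁ ≥ k √k / (4 √n) - 2`. -/
theorem lambda1_atom_lower_bound (k : ℕ) {V : Type} [Fintype V]
    (G : SimpleGraph V) (h : IsKAtom k G) :
    (k : ℝ) * Real.sqrt k / (4 * Real.sqrt (Fintype.card V)) - 2 ≤ lambda1 G := by
  classical
  obtain ⟨S, hStop, hS1, hSmono, hSQ⟩ := atom_chain h ‹Fintype V›
  set n := Fintype.card V with hn
  have hk1 : 1 ≤ k := h.one_le
  have hcard_ge : ∀ j, 1 ≤ j → j ≤ k → j ≤ (S j).card := by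
    intro j
    induction j with
    | zero => omega
    | succ i ihi =>
      intro _ hjk
      rcases Nat.eq_zero_or_pos i with h0 | h0
      · subst h0
        simp [hS1]
      · have h1 := ihi (by omega) (by omega)
        have h2 := (hSmono i h0 (by omega)).1
        omega
  have hnk : k ≤ n := by
    have h1 := hcard_ge k hk1 le_rfl
    rw [hStop, Finset.card_univ] at h1
    exact h1
  have hn1 : 1 ≤ n := le_trans hk1 hnk
  have hmono : ∀ i j, 1 ≤ i → i ≤ j → j ≤ k → (S i).card ≤ (S j).card := by
    intro i j hi
    induction j with
    | zero => omega
    | succ l ihl =>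
      intro hij hjk
      rcases Nat.lt_or_ge l i with hc | hc
      · have : i = l + 1 := by omega
        rw [this]
      · have h1 := ihl hc (by omega)
        have h2 := (hSmono l (by omega) (by omega)).1
        omega
  have hS_ne : ∀ j, 1 ≤ j → j ≤ k → (S j).Nonempty := fun j h1 h2 =>
    Finset.card_pos.mp (by have := hcard_ge j h1 h2; omega)
  have hR : ∀ m, 1 ≤ m → m ≤ k →
      2 * ∑ j ∈ Finset.Ico 1 m, ((S j).card : ℝ) ≤ lambda1 G * ((S m).card : ℝ) :=
    fun m h1 h2 => (hSQ m h1 h2).trans (Qr_le_lambda1 G (S m) (hS_ne m h1 h2))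
  have hlam0 : 0 ≤ lambda1 G := by
    have h0 := Qr_le_lambda1 G (S 1) (hS_ne 1 le_rfl hk1)
    have h1 := Qr_nonneg G (S 1)
    rw [hS1] at h0
    norm_num at h0
    linarith
  set sn := Real.sqrt n with hsndef
  set sk := Real.sqrt k with hskdef
  have hsn2 : sn ^ 2 = (n : ℝ) := Real.sq_sqrt (by positivity)
  have hsk2 : sk ^ 2 = (k : ℝ) := Real.sq_sqrt (by positivity)
  have hsn_pos : 0 < sn := Real.sqrt_pos.mpr (by exact_mod_cast hn1)
  have hsk_pos : 0 < sk := Real.sqrt_pos.mpr (by exact_mod_cast hk1)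
  have hsn1 : 1 ≤ sn := by nlinarith [hsn2, hsn_pos, (by exact_mod_cast hn1 : (1:ℝ) ≤ (n:ℝ))]
  have hsk1 : 1 ≤ sk := by nlinarith [hsk2, hsk_pos, (by exact_mod_cast hk1 : (1:ℝ) ≤ (k:ℝ))]
  set q : ℝ := (k : ℝ) * sk / (4 * sn) with hqdef
  show q - 2 ≤ lambda1 G
  by_cases hk8 : k ≤ 8
  · have hsksn : sk ≤ sn := Real.sqrt_le_sqrt (by exact_mod_cast hnk)
    have hq2 : q ≤ 2 := by
      rw [hqdef, div_le_iff₀ (by positivity)]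
      have hk8' : (k : ℝ) ≤ 8 := by exact_mod_cast hk8
      nlinarith
    linarith
  · push_neg at hk8
    have hk9 : (9 : ℝ) ≤ (k : ℝ) := by exact_mod_cast hk8
    set P : ℕ → Prop := fun j => ((S j).card : ℝ) ≤ sn * sk with hPdef
    set m := Nat.findGreatest P k with hmdef
    have hP1 : P 1 := by
      rw [hPdef]
      simp only [hS1]
      push_cast
      nlinarith
    have hm1 : 1 ≤ m := Nat.le_findGreatest hk1 hP1
    have hmk : m ≤ k := Nat.findGreatest_le k
    have hPm : P m := Nat.findGreatest_spec hk1 hP1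
    have hPm' : ((S m).card : ℝ) ≤ sn * sk := hPm
    have hPmax : ∀ j, m < j → j ≤ k → ¬ ((S j).card : ℝ) ≤ sn * sk := by
      intro j h1 h2
      exact Nat.findGreatest_is_greatest (show Nat.findGreatest P k < j by rw [← hmdef]; omega) h2
    clear_value m
    have hm_pos : (0:ℝ) < (m:ℝ) := by exact_mod_cast hm1
    -- bound (i) : lambda1 * (sn*sk) ≥ m(m-1)
    have hA : (m : ℝ) * ((m : ℝ) - 1) ≤ lambda1 G * (sn * sk) := by
      have h1 := hR m hm1 hmk
      have h2 : lambda1 G * ((S m).card : ℝ) ≤ lambda1 G * (sn * sk) :=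
        mul_le_mul_of_nonneg_left hPm' hlam0
      have h3 : ∑ j ∈ Finset.Ico 1 m, (j : ℝ) ≤ ∑ j ∈ Finset.Ico 1 m, ((S j).card : ℝ) := by
        refine Finset.sum_le_sum fun j hj => ?_
        have hj' := Finset.mem_Ico.mp hj
        exact_mod_cast hcard_ge j hj'.1 (by omega)
      have h4 := gauss_cast m
      linarith
    have hqsnsk : q * (sn * sk) = (k : ℝ) * (k : ℝ) / 4 := by
      have h0 : q * (sn * sk) = (k : ℝ) * sk ^ 2 / 4 := by
        rw [hqdef]
        field_simp
      rw [h0, hsk2]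
    by_cases hmeq : m = k
    · -- m = k : use bound (i)
      have hk4 : (k : ℝ) * (k : ℝ) / 4 ≤ (m : ℝ) * ((m : ℝ) - 1) := by
        rw [hmeq]
        nlinarith
      have : q * (sn * sk) ≤ lambda1 G * (sn * sk) := by linarith
      have hq_le : q ≤ lambda1 G :=
        le_of_mul_le_mul_right this (show (0:ℝ) < sn * sk by positivity)
      linarith
    · have hmlt : m < k := lt_of_le_of_ne hmk hmeq
      have hPm1 : ¬ ((S (m+1)).card : ℝ) ≤ sn * sk := hPmax (m+1) (by omega) (by omega)
      have hdbl : (S (m+1)).card ≤ 2 * (S m).card := (hSmono m hm1 hmlt).2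
      have hTlt : sn * sk < 2 * ((S m).card : ℝ) := by
        push_neg at hPm1
        have : ((S (m+1)).card : ℝ) ≤ 2 * ((S m).card : ℝ) := by exact_mod_cast hdbl
        linarith
      -- bound (ii) : lambda1 * n ≥ (k-m) * (sn*sk)
      have hB : ((k : ℝ) - (m : ℝ)) * (sn * sk) ≤ lambda1 G * (n : ℝ) := by
        have h1 := hR k hk1 le_rfl
        rw [hStop, Finset.card_univ, ← hn] at h1
        have h2 : ∑ j ∈ Finset.Ico m k, ((S m).card : ℝ)
            ≤ ∑ j ∈ Finset.Ico m k, ((S j).card : ℝ) := by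
          refine Finset.sum_le_sum fun j hj => ?_
          have hj' := Finset.mem_Ico.mp hj
          exact_mod_cast hmono m j hm1 hj'.1 (by omega)
        have h3 : ∑ j ∈ Finset.Ico m k, ((S j).card : ℝ)
            ≤ ∑ j ∈ Finset.Ico 1 k, ((S j).card : ℝ) := by
          refine Finset.sum_le_sum_of_subset_of_nonneg ?_ (fun j _ _ => by positivity)
          exact Finset.Ico_subset_Ico hm1 le_rfl
        have h4 : ∑ j ∈ Finset.Ico m k, ((S m).card : ℝ)
            = ((k : ℝ) - (m : ℝ)) * ((S m).card : ℝ) := by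
          rw [Finset.sum_const, Nat.card_Ico, nsmul_eq_mul, Nat.cast_sub hmk]
        have hkm0 : (0:ℝ) ≤ (k : ℝ) - (m : ℝ) := by
          have : (m:ℝ) ≤ (k:ℝ) := by exact_mod_cast hmk
          linarith
        have h5 : ((k:ℝ) - (m:ℝ)) * (sn * sk)
            ≤ ((k:ℝ) - (m:ℝ)) * (2 * ((S m).card : ℝ)) :=
          mul_le_mul_of_nonneg_left hTlt.le hkm0
        linarith
      by_cases hkm4 : k ≤ 4 * (k - m)
      · -- use bound (ii)
        have hkm4' : (k : ℝ) ≤ 4 * ((k : ℝ) - (m : ℝ)) := by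
          have h1 : (k:ℝ) ≤ ((4 * (k - m) : ℕ) : ℝ) := by exact_mod_cast hkm4
          rw [Nat.cast_mul, Nat.cast_sub hmk] at h1
          push_cast at h1
          linarith
        have hqn : q * (n : ℝ) = (k : ℝ) / 4 * (sn * sk) := by
          rw [hqdef, ← hsn2]
          field_simp
        have h5 : q * (n : ℝ) ≤ lambda1 G * (n : ℝ) := by
          rw [hqn]
          have : (k : ℝ) / 4 * (sn * sk) ≤ ((k : ℝ) - (m : ℝ)) * (sn * sk) := by
            have hsnsk : (0:ℝ) < sn * sk := by positivity
            nlinarith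
          linarith
        have hq_le : q ≤ lambda1 G :=
          le_of_mul_le_mul_right h5 (show (0:ℝ) < (n:ℝ) by exact_mod_cast hn1)
        linarith
      · -- m > 3k/4 : use bound (i)
        push_neg at hkm4
        have hm34 : 3 * k < 4 * m := by omega
        have hm34' : 3 * (k:ℝ) < 4 * (m:ℝ) := by exact_mod_cast hm34
        have hk4 : (k : ℝ) * (k : ℝ) / 4 ≤ (m : ℝ) * ((m : ℝ) - 1) := by
          nlinarith
        have h6 : q * (sn * sk) ≤ lambda1 G * (sn * sk) := by linarith
        have hq_le : q ≤ lambda1 G :=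
          le_of_mul_le_mul_right h6 (show (0:ℝ) < sn * sk by positivity)
        linarith
end

section
/- For every finite simple graph G on n ≥ 1 vertices, the Grundy number satisfies Γ(G) ≤ (4(λ₁(G) + 2))^{2/3} · n^{1/3}, where λ₁(G) is the largest eigenvalue of the adjacency matrix of G. In particular, Γ(G) = O(λ₁(G) · (n/λ₁(G))^{1/3}). -/
/-- The first-fit (greedy) coloring of `G` along the vertex ordering `0 < 1 < ⋯`:
each vertex receives the smallest color (a natural number) not used by its
previously colored neighbors. -/
noncomputable def greedyColor {n : ℕ} (G : SimpleGraph (Fin n)) : Fin n → ℕ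
  | i => sInf {c : ℕ | ∀ j : Fin n, j < i → G.Adj j i → greedyColor G j ≠ c}
  termination_by i => i.1

/-- The Grundy number of `G`: the largest number of colors used by the
first-fit coloring, over all orderings of the vertices. -/
noncomputable def grundyNumber {V : Type} [Fintype V] (G : SimpleGraph V) : ℕ :=
  letI := Classical.decEq V
  Finset.univ.sup fun σ : Fin (Fintype.card V) ≃ V =>
    (Finset.univ.image (greedyColor (G.comap σ))).card


set_option maxHeartbeats 1000000

section AuxLemmas
open Matrix


lemma dot_pos' {V : Type} [Fintype V] (v : V → ℝ) (hv : v ≠ 0) : 0 < v ⬝ᵥ v := by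
  have h1 : ∃ i, v i ≠ 0 := by
    by_contra h; push_neg at h; exact hv (funext h)
  obtain ⟨i, hi⟩ := h1
  have : v ⬝ᵥ v = ∑ j, v j * v j := rfl
  rw [this]
  exact Finset.sum_pos' (fun j _ => mul_self_nonneg _) ⟨i, Finset.mem_univ i, mul_self_pos.mpr hi⟩

lemma lambda1_ge {V : Type} [Fintype V] [Nonempty V] (G : SimpleGraph V)
    [inst : DecidableRel G.Adj] (v : V → ℝ) (hv : v ≠ 0) :
    v ⬝ᵥ (G.adjMatrix ℝ *ᵥ v) ≤
      (sSup {x : ℝ | ∃ w : V → ℝ, w ≠ 0 ∧ G.adjMatrix ℝ *ᵥ w = x • w}) * (v ⬝ᵥ v) := by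
  letI := Classical.decEq V
  set A := G.adjMatrix ℝ with hAdef
  set S := {x : ℝ | ∃ w : V → ℝ, w ≠ 0 ∧ A *ᵥ w = x • w} with hS
  have hA : A.IsHermitian := by
    rw [Matrix.IsHermitian]; ext i j
    simp only [Matrix.conjTranspose_apply, RCLike.star_def, starRingEnd_apply, star_trivial]
    simp [hAdef, SimpleGraph.adjMatrix_apply, SimpleGraph.adj_comm]
  set T := Matrix.toEuclideanLin A with hTdef
  have hT : T.IsSymmetric := Matrix.isHermitian_iff_isSymmetric.mp hA
  set rq : EuclideanSpace ℝ V → ℝ := fun x => RCLike.re (inner ℝ (T x) x : ℝ) / ‖x‖ ^ 2 with hrq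
  -- rq of a plain vector
  have hrq_eq : ∀ u : V → ℝ, rq ((WithLp.equiv 2 (V → ℝ)).symm u)
      = (u ⬝ᵥ (A *ᵥ u)) / (u ⬝ᵥ u) := by
    intro u
    have h1 : (inner ℝ (T ((WithLp.equiv 2 (V → ℝ)).symm u))
        ((WithLp.equiv 2 (V → ℝ)).symm u) : ℝ) = (A *ᵥ u) ⬝ᵥ u := by
      rw [hTdef, Matrix.toEuclideanLin_apply]
      have := EuclideanSpace.inner_toLp_toLp (𝕜 := ℝ)
        (A *ᵥ (WithLp.equiv 2 (V → ℝ) ((WithLp.equiv 2 (V → ℝ)).symm u))) u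
      simpa [dotProduct_comm] using this
    have h2 : ‖(WithLp.equiv 2 (V → ℝ)).symm u‖ ^ 2 = u ⬝ᵥ u := by
      rw [← real_inner_self_eq_norm_sq]
      have := EuclideanSpace.inner_toLp_toLp (𝕜 := ℝ) u u
      simpa using this
    simp only [hrq, h1, h2, dotProduct_comm]
    rfl
  -- rq is bounded above on nonzero vectors
  set C := ‖LinearMap.toContinuousLinearMap T‖ with hC
  have hub : ∀ x : EuclideanSpace ℝ V, rq x ≤ max C 0 := by
    intro x
    rcases eq_or_ne x 0 with h | h
    · simp [hrq, h]
    have hx2 : (0:ℝ) < ‖x‖ ^ 2 := pow_pos (norm_pos_iff.mpr h) 2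
    rw [hrq]
    refine le_max_of_le_left ((div_le_iff₀ hx2).mpr ?_)
    calc RCLike.re (inner ℝ (T x) x : ℝ) = (inner ℝ (T x) x : ℝ) := rfl
      _ ≤ ‖T x‖ * ‖x‖ := real_inner_le_norm _ _
      _ ≤ C * ‖x‖ * ‖x‖ := by
          have := (LinearMap.toContinuousLinearMap T).le_opNorm x
          exact mul_le_mul_of_nonneg_right (by simpa using this) (norm_nonneg _)
      _ = C * ‖x‖ ^ 2 := by ring
  have hbdd : BddAbove (Set.range fun x : { x : EuclideanSpace ℝ V // x ≠ 0 } => rq ↑x) := by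
    refine ⟨max C 0, ?_⟩
    rintro y ⟨x, rfl⟩
    exact hub x
  have hev := hT.hasEigenvalue_iSup_of_finiteDimensional
  set μ : ℝ := ⨆ x : { x : EuclideanSpace ℝ V // x ≠ 0 }, rq ↑x with hμ
  -- μ is in S
  obtain ⟨w, hw⟩ := Module.End.HasEigenvalue.exists_hasEigenvector hev
  have hw0 : w ≠ 0 := hw.right
  have hweq : T w = μ • w := by
    have := Module.End.mem_eigenspace_iff.mp hw.left
    simpa using this
  have hμS : μ ∈ S := by
    refine ⟨WithLp.equiv 2 (V → ℝ) w, ?_, ?_⟩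
    · intro h
      apply hw0
      have := congrArg (WithLp.equiv 2 (V → ℝ)).symm h
      simpa using this
    · have h1 : T w = (WithLp.equiv 2 (V → ℝ)).symm (A *ᵥ (WithLp.equiv 2 (V → ℝ) w)) :=
        Matrix.toEuclideanLin_apply A w
      rw [hweq] at h1
      have := congrArg (WithLp.equiv 2 (V → ℝ)) h1
      simpa [WithLp.ofLp_smul] using this.symm
  -- every element of S is at most μ
  have hSub : ∀ x ∈ S, x ≤ μ := by
    rintro x ⟨u, hu0, hux⟩
    have h1 : rq ((WithLp.equiv 2 (V → ℝ)).symm u) = x := by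
      rw [hrq_eq, hux]
      have hpos := dot_pos' u hu0
      have : u ⬝ᵥ (x • u) = x * (u ⬝ᵥ u) := by
        simp [dotProduct_smul, smul_eq_mul]
      rw [this]
      field_simp
    have hu0' : (WithLp.equiv 2 (V → ℝ)).symm u ≠ 0 := by
      intro h
      apply hu0
      have := congrArg (WithLp.equiv 2 (V → ℝ)) h
      simpa using this
    calc x = rq ((WithLp.equiv 2 (V → ℝ)).symm u) := h1.symm
      _ ≤ μ := le_ciSup hbdd ⟨(WithLp.equiv 2 (V → ℝ)).symm u, hu0'⟩
  have hsup : sSup S = μ := le_antisymm (csSup_le ⟨μ, hμS⟩ hSub) (le_csSup ⟨μ, hSub⟩ hμS)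
  -- conclude
  have hvpos := dot_pos' v hv
  have hv0' : (WithLp.equiv 2 (V → ℝ)).symm v ≠ 0 := by
    intro h
    apply hv
    have := congrArg (WithLp.equiv 2 (V → ℝ)) h
    simpa using this
  have hle : rq ((WithLp.equiv 2 (V → ℝ)).symm v) ≤ μ :=
    le_ciSup hbdd ⟨(WithLp.equiv 2 (V → ℝ)).symm v, hv0'⟩
  rw [hrq_eq] at hle
  rw [hsup]
  calc v ⬝ᵥ (A *ᵥ v) = (v ⬝ᵥ (A *ᵥ v)) / (v ⬝ᵥ v) * (v ⬝ᵥ v) := by field_simp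
    _ ≤ μ * (v ⬝ᵥ v) := mul_le_mul_of_nonneg_right hle hvpos.le

lemma greedy_wit {n : ℕ} (G : SimpleGraph (Fin n)) (i : Fin n) (t : ℕ)
    (ht : t < greedyColor G i) : ∃ j, j < i ∧ G.Adj j i ∧ greedyColor G j = t := by
  have hEq : greedyColor G i
      = sInf {c : ℕ | ∀ j : Fin n, j < i → G.Adj j i → greedyColor G j ≠ c} := by
    rw [greedyColor]
  rw [hEq] at ht
  have := Nat.notMem_of_lt_sInf ht
  simp only [Set.mem_setOf_eq, not_forall] at this
  obtain ⟨j, hj, hadj, hne⟩ := this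
  exact ⟨j, hj, hadj, by simpa using hne⟩

lemma lower_eq_range (I : Finset ℕ) (h : ∀ t ∈ I, ∀ t', t' < t → t' ∈ I) :
    I = Finset.range I.card := by
  have hsub : I ⊆ Finset.range I.card := by
    intro t ht
    rw [Finset.mem_range]
    have hsub' : Finset.range (t + 1) ⊆ I := by
      intro x hx
      rw [Finset.mem_range, Nat.lt_succ_iff] at hx
      rcases eq_or_lt_of_le hx with rfl | hlt
      · exact ht
      · exact h t ht x hlt
    have := Finset.card_le_card hsub'
    simpa using this
  exact Finset.eq_of_subset_of_card_le hsub (by simp)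

end AuxLemmas

section AuxLemmas2
open Matrix

lemma lambda1_ray {V : Type} [Fintype V] [Nonempty V] (G : SimpleGraph V) (v : V → ℝ)
    (hv : v ≠ 0) :
    letI := Classical.decRel G.Adj
    v ⬝ᵥ (G.adjMatrix ℝ *ᵥ v) ≤ lambda1 G * (v ⬝ᵥ v) :=
  lambda1_ge (inst := Classical.decRel G.Adj) G v hv

lemma lambda1_nonneg {V : Type} [Fintype V] [Nonempty V] (G : SimpleGraph V) :
    0 ≤ lambda1 G := by
  letI := Classical.decRel G.Adj
  obtain ⟨v₀⟩ := ‹Nonempty V›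
  classical
  have h := lambda1_ray G (Pi.single v₀ 1) (by
    intro h
    have := congrFun h v₀
    simp at this)
  have h1 : (Pi.single v₀ 1 : V → ℝ) ⬝ᵥ (G.adjMatrix ℝ *ᵥ Pi.single v₀ 1) = 0 := by
    simp only [dotProduct, Matrix.mulVec, Pi.single_apply, SimpleGraph.adjMatrix_apply,
      mul_ite, mul_one, mul_zero, ite_mul, zero_mul, one_mul]
    apply Finset.sum_eq_zero
    intro x _
    rw [Finset.sum_ite_eq' Finset.univ v₀ (fun w => if G.Adj x w then (1:ℝ) else 0)]
    by_cases hx : x = v₀ <;> simp [hx]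
  have h2 : (Pi.single v₀ 1 : V → ℝ) ⬝ᵥ (Pi.single v₀ 1 : V → ℝ) = 1 := by
    simp [dotProduct, Pi.single_apply]
  rw [h1, h2, mul_one] at h
  exact h

lemma key_cube {V : Type} [Fintype V] [Nonempty V] (G : SimpleGraph V) (f : V → ℕ) (k : ℕ)
    (hk : 4 ≤ k)
    (hex : ∀ t, t < k → ∃ v, f v = t)
    (hwit : ∀ v, ∀ t, t < f v → ∃ u, G.Adj u v ∧ f u = t) :
    ((k : ℝ)) ^ 3 ≤ 16 * (lambda1 G + 2) ^ 2 * (Fintype.card V : ℝ) := by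
  letI := Classical.decRel G.Adj
  classical
  set n := Fintype.card V with hn
  set s := 2 * k / 3 with hs
  have hs1 : 2 * k ≤ 3 * s + 2 := by omega
  have hs2 : 3 * s ≤ 2 * k := by omega
  have hsk : s < k := by omega
  set S : Finset V := Finset.univ.filter (fun v => f v < s) with hS
  set T : Finset V := Finset.univ.filter (fun v => ¬ f v < s) with hT
  -- T has at least k - s elements
  have hTcard : k - s ≤ T.card := by
    have hsub : Finset.Ico s k ⊆ T.image f := by
      intro t ht
      rw [Finset.mem_Ico] at ht
      obtain ⟨v, hv⟩ := hex t ht.2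
      refine Finset.mem_image.mpr ⟨v, ?_, hv⟩
      rw [hT, Finset.mem_filter]
      exact ⟨Finset.mem_univ _, by omega⟩
    calc k - s = (Finset.Ico s k).card := (Nat.card_Ico s k).symm
      _ ≤ (T.image f).card := Finset.card_le_card hsub
      _ ≤ T.card := Finset.card_image_le
  -- every vertex of T has at least s neighbors in S
  have hdeg : ∀ w ∈ T, s ≤ (S.filter (fun u => G.Adj u w)).card := by
    intro w hw
    rw [hT, Finset.mem_filter] at hw
    have hfw : s ≤ f w := by omega
    have hsub : Finset.range s ⊆ (S.filter (fun u => G.Adj u w)).image f := by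
      intro t ht
      rw [Finset.mem_range] at ht
      obtain ⟨u, hadj, hu⟩ := hwit w t (lt_of_lt_of_le ht hfw)
      refine Finset.mem_image.mpr ⟨u, ?_, hu⟩
      rw [Finset.mem_filter, hS, Finset.mem_filter]
      exact ⟨⟨Finset.mem_univ _, by omega⟩, hadj⟩
    calc s = (Finset.range s).card := (Finset.card_range s).symm
      _ ≤ ((S.filter (fun u => G.Adj u w)).image f).card := Finset.card_le_card hsub
      _ ≤ (S.filter (fun u => G.Adj u w)).card := Finset.card_image_le
  set α : ℝ := Real.sqrt (T.card) with hα
  set β : ℝ := Real.sqrt n with hβ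
  have hTpos : 0 < T.card := by omega
  have hnpos : 0 < n := Fintype.card_pos
  have hαpos : 0 < α := Real.sqrt_pos.mpr (by exact_mod_cast hTpos)
  have hβpos : 0 < β := Real.sqrt_pos.mpr (by exact_mod_cast hnpos)
  have hα2 : α ^ 2 = T.card := Real.sq_sqrt (Nat.cast_nonneg _)
  have hβ2 : β ^ 2 = n := Real.sq_sqrt (Nat.cast_nonneg _)
  set v : V → ℝ := fun u => if f u < s then α else β with hv
  have hvnn : ∀ u, 0 ≤ v u := by
    intro u; rw [hv]; dsimp only; split
    · exact hαpos.le
    · exact hβpos.le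
  have hv0 : v ≠ 0 := by
    obtain ⟨w₀, hw₀⟩ := Finset.card_pos.mp hTpos
    rw [hT, Finset.mem_filter] at hw₀
    intro h
    have := congrFun h w₀
    rw [hv] at this
    simp only [if_neg hw₀.2] at this
    exact absurd this hβpos.ne'
  set A := G.adjMatrix ℝ with hA
  have hAnn : ∀ u w, 0 ≤ A u w := by
    intro u w; rw [hA]; simp [SimpleGraph.adjMatrix_apply]; split <;> norm_num
  -- the Rayleigh quotient bound
  have hray := lambda1_ray G v hv0
  -- lower bound the numerator
  have hQ : 2 * s * α * β * T.card ≤ v ⬝ᵥ (A *ᵥ v) := by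
    have hsplit : v ⬝ᵥ (A *ᵥ v)
        = ∑ u ∈ S, v u * (A *ᵥ v) u + ∑ u ∈ T, v u * (A *ᵥ v) u := by
      rw [hS, hT]
      exact (Finset.sum_filter_add_sum_filter_not Finset.univ _ _).symm
    -- inner product bound for vertices of T
    have hinnT : ∀ u ∈ T, (s : ℝ) * α ≤ (A *ᵥ v) u := by
      intro u hu
      have : (A *ᵥ v) u = ∑ w, A u w * v w := rfl
      rw [this]
      calc (s : ℝ) * α ≤ ((S.filter (fun x => G.Adj x u)).card : ℝ) * α := by
            have := hdeg u hu
            have hc : (s:ℝ) ≤ ((S.filter (fun x => G.Adj x u)).card : ℝ) := by exact_mod_cast this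
            exact mul_le_mul_of_nonneg_right hc hαpos.le
        _ = ∑ w ∈ S.filter (fun x => G.Adj x u), α := by rw [Finset.sum_const]; simp [mul_comm]
        _ ≤ ∑ w ∈ S.filter (fun x => G.Adj x u), A u w * v w := by
            apply Finset.sum_le_sum
            intro w hw
            rw [Finset.mem_filter] at hw
            have hw' := hw.1
            rw [hS, Finset.mem_filter] at hw'
            have hvw : v w = α := by rw [hv]; simp [hw'.2]
            have hAuw : A u w = 1 := by
              rw [hA]; simp [SimpleGraph.adjMatrix_apply, hw.2.symm]
            rw [hvw, hAuw, one_mul]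
        _ ≤ ∑ w, A u w * v w := by
            apply Finset.sum_le_sum_of_subset_of_nonneg (Finset.filter_subset _ _ |>.trans
              (Finset.subset_univ _))
            intro w _ _
            exact mul_nonneg (hAnn u w) (hvnn w)
    -- bound for sum over T
    have hsumT : (T.card : ℝ) * (β * ((s:ℝ) * α)) ≤ ∑ u ∈ T, v u * (A *ᵥ v) u := by
      calc (T.card : ℝ) * (β * ((s:ℝ) * α)) = ∑ _u ∈ T, β * ((s:ℝ) * α) := by
            rw [Finset.sum_const]; simp [mul_comm]
        _ ≤ ∑ u ∈ T, v u * (A *ᵥ v) u := by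
            apply Finset.sum_le_sum
            intro u hu
            have hvu : v u = β := by
              rw [hT, Finset.mem_filter] at hu
              rw [hv]; simp [hu.2]
            rw [hvu]
            exact mul_le_mul_of_nonneg_left (hinnT u hu) hβpos.le
    -- bound for sum over S via double counting
    have hsumS : (T.card : ℝ) * ((s:ℝ) * (α * β)) ≤ ∑ u ∈ S, v u * (A *ᵥ v) u := by
      have hcount : ∀ u ∈ S, ((T.filter (fun w => G.Adj u w)).card : ℝ) * (α * β)
          ≤ v u * (A *ᵥ v) u := by
        intro u hu
        have hvu : v u = α := by
          rw [hS, Finset.mem_filter] at hu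
          rw [hv]; simp [hu.2]
        have : (A *ᵥ v) u = ∑ w, A u w * v w := rfl
        rw [hvu, this]
        have h1 : ((T.filter (fun w => G.Adj u w)).card : ℝ) * β
            ≤ ∑ w, A u w * v w := by
          calc ((T.filter (fun w => G.Adj u w)).card : ℝ) * β
              = ∑ w ∈ T.filter (fun w => G.Adj u w), β := by rw [Finset.sum_const]; simp [mul_comm]
            _ ≤ ∑ w ∈ T.filter (fun w => G.Adj u w), A u w * v w := by
                apply Finset.sum_le_sum
                intro w hw
                rw [Finset.mem_filter] at hw
                have hw' := hw.1
                rw [hT, Finset.mem_filter] at hw'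
                have hvw : v w = β := by rw [hv]; simp [hw'.2]
                have hAuw : A u w = 1 := by
                  rw [hA]; simp [SimpleGraph.adjMatrix_apply, hw.2]
                rw [hvw, hAuw, one_mul]
            _ ≤ ∑ w, A u w * v w := by
                apply Finset.sum_le_sum_of_subset_of_nonneg (Finset.filter_subset _ _ |>.trans
                  (Finset.subset_univ _))
                intro w _ _
                exact mul_nonneg (hAnn u w) (hvnn w)
        calc ((T.filter (fun w => G.Adj u w)).card : ℝ) * (α * β)
            = α * (((T.filter (fun w => G.Adj u w)).card : ℝ) * β) := by ring
          _ ≤ α * ∑ w, A u w * v w := mul_le_mul_of_nonneg_left h1 hαpos.le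
      have hdouble : (T.card : ℝ) * (s:ℝ)
          ≤ ∑ u ∈ S, ((T.filter (fun w => G.Adj u w)).card : ℝ) := by
        have hswap : ∑ u ∈ S, ((T.filter (fun w => G.Adj u w)).card)
            = ∑ w ∈ T, ((S.filter (fun u => G.Adj u w)).card) := by
          simp only [Finset.card_filter]
          rw [Finset.sum_comm]
        have : (T.card) * s ≤ ∑ w ∈ T, ((S.filter (fun u => G.Adj u w)).card) := by
          calc T.card * s = ∑ _w ∈ T, s := by rw [Finset.sum_const]; simp [mul_comm]
            _ ≤ _ := Finset.sum_le_sum hdeg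
        rw [← hswap] at this
        exact_mod_cast this
      calc (T.card : ℝ) * ((s:ℝ) * (α * β)) = ((T.card : ℝ) * (s:ℝ)) * (α * β) := by ring
        _ ≤ (∑ u ∈ S, ((T.filter (fun w => G.Adj u w)).card : ℝ)) * (α * β) := by
            exact mul_le_mul_of_nonneg_right hdouble (mul_nonneg hαpos.le hβpos.le)
        _ = ∑ u ∈ S, ((T.filter (fun w => G.Adj u w)).card : ℝ) * (α * β) := by
            rw [Finset.sum_mul]
        _ ≤ ∑ u ∈ S, v u * (A *ᵥ v) u := Finset.sum_le_sum hcount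
    rw [hsplit]
    calc 2 * s * α * β * T.card
        = (T.card : ℝ) * ((s:ℝ) * (α * β)) + (T.card : ℝ) * (β * ((s:ℝ) * α)) := by ring
      _ ≤ _ := add_le_add hsumS hsumT
  -- upper bound the denominator
  have hD : v ⬝ᵥ v ≤ 2 * n * T.card := by
    have hsplit : v ⬝ᵥ v = ∑ u ∈ S, v u * v u + ∑ u ∈ T, v u * v u := by
      rw [hS, hT]
      exact (Finset.sum_filter_add_sum_filter_not Finset.univ _ _).symm
    rw [hsplit]
    have h1 : ∑ u ∈ S, v u * v u = (S.card : ℝ) * (α * α) := by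
      calc ∑ u ∈ S, v u * v u = ∑ _u ∈ S, (α * α) := by
            refine Finset.sum_congr rfl (fun u hu => ?_)
            rw [hS, Finset.mem_filter] at hu
            rw [hv]; simp [hu.2]
        _ = (S.card : ℝ) * (α * α) := by rw [Finset.sum_const, nsmul_eq_mul]
    have h2 : ∑ u ∈ T, v u * v u = (T.card : ℝ) * (β * β) := by
      calc ∑ u ∈ T, v u * v u = ∑ _u ∈ T, (β * β) := by
            refine Finset.sum_congr rfl (fun u hu => ?_)
            rw [hT, Finset.mem_filter] at hu
            rw [hv]; simp [hu.2]
        _ = (T.card : ℝ) * (β * β) := by rw [Finset.sum_const, nsmul_eq_mul]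
    rw [h1, h2]
    have hScard : (S.card : ℝ) ≤ n := by
      have : S.card ≤ n := by
        rw [hn]
        exact (Finset.card_le_card (Finset.subset_univ S)).trans (by simp)
      exact_mod_cast this
    have hαα : α * α = (T.card : ℝ) := by nlinarith [hα2]
    have hββ : β * β = (n : ℝ) := by nlinarith [hβ2]
    rw [hαα, hββ]
    nlinarith [hScard, hTpos, hnpos]
  -- combine
  have hlam0 := lambda1_nonneg G
  set lam := lambda1 G with hlam
  have hstep : (s : ℝ) * α ≤ lam * β := by
    have h1 : 2 * s * α * β * T.card ≤ lam * (2 * n * T.card) := by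
      calc 2 * s * α * β * T.card ≤ v ⬝ᵥ (A *ᵥ v) := hQ
        _ ≤ lam * (v ⬝ᵥ v) := hray
        _ ≤ lam * (2 * n * T.card) := mul_le_mul_of_nonneg_left hD hlam0
    rw [← hα2, ← hβ2] at h1
    have hc : (0:ℝ) < 2 * β * α ^ 2 := mul_pos (mul_pos two_pos hβpos) (pow_pos hαpos 2)
    have h3 : ((s:ℝ) * α) * (2 * β * α ^ 2) ≤ (lam * β) * (2 * β * α ^ 2) := by
      calc ((s:ℝ) * α) * (2 * β * α ^ 2) = 2 * s * α * β * α ^ 2 := by ring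
        _ ≤ lam * (2 * β ^ 2 * α ^ 2) := h1
        _ = (lam * β) * (2 * β * α ^ 2) := by ring
    exact le_of_mul_le_mul_right h3 hc
  -- square it
  have hsq : (s:ℝ)^2 * T.card ≤ lam^2 * n := by
    have h2 : ((s:ℝ) * α)^2 ≤ (lam * β)^2 := by
      apply sq_le_sq' _ hstep
      nlinarith [mul_nonneg (Nat.cast_nonneg s : (0:ℝ) ≤ s) hαpos.le,
        mul_nonneg hlam0 hβpos.le]
    calc (s:ℝ)^2 * T.card = ((s:ℝ) * α)^2 := by rw [mul_pow, hα2]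
      _ ≤ (lam * β)^2 := h2
      _ = lam^2 * n := by rw [mul_pow, hβ2]
  -- numeric inequality
  have hks : ((k - s : ℕ) : ℝ) = (k : ℝ) - (s : ℝ) := by
    push_cast [Nat.cast_sub hsk.le]; ring
  have hTk : (k:ℝ) - (s:ℝ) ≤ (T.card : ℝ) := by
    rw [← hks]; exact_mod_cast hTcard
  have hfin : (k:ℝ)^3 ≤ 16 * ((s:ℝ)^2 * ((k:ℝ) - (s:ℝ))) := by
    have h1 : 2 * (k:ℝ) ≤ 3 * s + 2 := by exact_mod_cast hs1
    have h2 : 3 * (s:ℝ) ≤ 2 * k := by exact_mod_cast hs2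
    have h4 : (4:ℝ) ≤ k := by exact_mod_cast hk
    have hs3 : (2*(k:ℝ)-2)/3 ≤ (s:ℝ) := by linarith
    have hk3 : (k:ℝ)/3 ≤ (k:ℝ) - (s:ℝ) := by linarith
    have hsp : (0:ℝ) ≤ (2*(k:ℝ)-2)/3 := by linarith
    have hq1 : ((2*(k:ℝ)-2)/3)^2 ≤ (s:ℝ)^2 := by nlinarith [hs3, hsp]
    have hq2 : ((2*(k:ℝ)-2)/3)^2 * ((k:ℝ)/3) ≤ (s:ℝ)^2 * ((k:ℝ)-(s:ℝ)) :=
      mul_le_mul hq1 hk3 (by linarith) (sq_nonneg _)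
    have h40 : (0:ℝ) ≤ (k:ℝ) - 4 := by linarith
    have hk0 : (0:ℝ) ≤ (k:ℝ) := by linarith
    nlinarith [hq2, mul_nonneg (mul_nonneg h40 hk0) hk0]
  have hsnn : (0:ℝ) ≤ (s:ℝ)^2 := sq_nonneg _
  calc (k:ℝ)^3 ≤ 16 * ((s:ℝ)^2 * ((k:ℝ) - (s:ℝ))) := hfin
    _ ≤ 16 * ((s:ℝ)^2 * (T.card : ℝ)) := by nlinarith [hTk, hsnn]
    _ ≤ 16 * (lam^2 * n) := by nlinarith [hsq]
    _ ≤ 16 * (lam + 2)^2 * n := by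
        have : lam^2 ≤ (lam + 2)^2 := by nlinarith [hlam0]
        have hnn : (0:ℝ) ≤ (n:ℝ) := Nat.cast_nonneg _
        nlinarith [mul_le_mul_of_nonneg_right this hnn]

end AuxLemmas2

/-- For every graph `G` on `n ≥ 1` vertices, the Grundy number satisfies
`Γ(G) ≤ (4 (λ₁(G) + 2))^(2/3) · n^(1/3)`; in particular
`Γ(G) = O(λ₁(G) (n / λ₁(G))^(1/3))`. -/
theorem grundy_le_lambda1_card_bound {V : Type} [Fintype V] [Nonempty V]
    (G : SimpleGraph V) :
    (grundyNumber G : ℝ) ≤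
      (4 * (lambda1 G + 2)) ^ ((2 : ℝ) / 3) *
        (Fintype.card V : ℝ) ^ ((1 : ℝ) / 3) := by
  classical
  haveI : Nonempty (Fin (Fintype.card V) ≃ V) := ⟨(Fintype.equivFin V).symm⟩
  obtain ⟨σ, -, hσ⟩ := Finset.exists_mem_eq_sup
    (Finset.univ : Finset (Fin (Fintype.card V) ≃ V)) Finset.univ_nonempty
    (fun σ => (Finset.univ.image (greedyColor (G.comap σ))).card)
  set c : Fin (Fintype.card V) → ℕ := greedyColor (G.comap σ) with hc
  have hgr : grundyNumber G = (Finset.univ.image c).card := hσ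
  set k : ℕ := (Finset.univ.image c).card with hk
  rw [hgr]
  set f : V → ℕ := fun v => c (σ.symm v) with hf
  -- the witness property for f
  have hwitf : ∀ v : V, ∀ t, t < f v → ∃ u, G.Adj u v ∧ f u = t := by
    intro v t ht
    obtain ⟨j, hj, hadj, hcj⟩ := greedy_wit (G.comap σ) (σ.symm v) t ht
    refine ⟨σ j, ?_, ?_⟩
    · have hadj' : G.Adj (σ j) (σ (σ.symm v)) := hadj
      simpa using hadj'
    · show c (σ.symm (σ j)) = t
      simpa using hcj
  -- the image of c is an initial segment
  have hlow : ∀ t ∈ Finset.univ.image c, ∀ t', t' < t → t' ∈ Finset.univ.image c := by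
    intro t ht t' ht'
    obtain ⟨i, -, hi⟩ := Finset.mem_image.mp ht
    obtain ⟨j, hj, hadj, hcj⟩ := greedy_wit (G.comap σ) i t' (by exact lt_of_lt_of_eq ht' hi.symm)
    exact Finset.mem_image.mpr ⟨j, Finset.mem_univ _, hcj⟩
  have hI : Finset.univ.image c = Finset.range k := lower_eq_range _ hlow
  have hex : ∀ t, t < k → ∃ v : V, f v = t := by
    intro t ht
    have : t ∈ Finset.univ.image c := by rw [hI]; exact Finset.mem_range.mpr ht
    obtain ⟨i, -, hi⟩ := Finset.mem_image.mp this
    exact ⟨σ i, by simpa [hf] using hi⟩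
  have hl0 := lambda1_nonneg G
  have hnpos : (0:ℝ) < (Fintype.card V : ℝ) := by exact_mod_cast Fintype.card_pos
  rcases le_or_gt k 4 with hk4 | hk4
  · -- trivial case : k ≤ 4
    have h8 : (8:ℝ) ≤ 4 * (lambda1 G + 2) := by linarith
    have h84 : (8:ℝ) ^ ((2:ℝ)/3) = 4 := by
      rw [show (8:ℝ) = 2 ^ (3:ℕ) by norm_num, ← Real.rpow_natCast (2:ℝ) 3,
        ← Real.rpow_mul (by norm_num)]
      norm_num
    have h2 : (8:ℝ) ^ ((2:ℝ)/3) ≤ (4 * (lambda1 G + 2)) ^ ((2:ℝ)/3) :=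
      Real.rpow_le_rpow (by norm_num) h8 (by norm_num)
    have hcard1 : (1:ℝ) ≤ (Fintype.card V : ℝ) := by
      exact_mod_cast Nat.one_le_iff_ne_zero.mpr Fintype.card_ne_zero
    have h3 : (1:ℝ) ≤ (Fintype.card V : ℝ) ^ ((1:ℝ)/3) :=
      calc (1:ℝ) = (1:ℝ) ^ ((1:ℝ)/3) := (Real.one_rpow _).symm
        _ ≤ (Fintype.card V : ℝ) ^ ((1:ℝ)/3) :=
            Real.rpow_le_rpow zero_le_one hcard1 (by norm_num)
    calc (k:ℝ) ≤ 4 := by exact_mod_cast hk4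
      _ = (8:ℝ) ^ ((2:ℝ)/3) * 1 := by rw [h84, mul_one]
      _ ≤ (4 * (lambda1 G + 2)) ^ ((2:ℝ)/3) * (Fintype.card V : ℝ) ^ ((1:ℝ)/3) :=
          mul_le_mul h2 h3 (by norm_num) (by positivity)
  · -- main case : k ≥ 5
    have hcube := key_cube G f k (by omega) hex hwitf
    set L : ℝ := 4 * (lambda1 G + 2) with hL
    have hLpos : (0:ℝ) < L := by rw [hL]; linarith
    have h1 : (k:ℝ) ^ (3:ℕ) ≤ L ^ (2:ℕ) * (Fintype.card V : ℝ) := by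
      have hLsq : L ^ (2:ℕ) = 16 * (lambda1 G + 2) ^ 2 := by rw [hL]; ring
      rw [hLsq]
      calc (k:ℝ) ^ (3:ℕ) = (k:ℝ) ^ 3 := by norm_num
        _ ≤ 16 * (lambda1 G + 2) ^ 2 * (Fintype.card V : ℝ) := hcube
        _ = 16 * (lambda1 G + 2) ^ 2 * (Fintype.card V : ℝ) := rfl
    have hk0 : (0:ℝ) ≤ (k:ℝ) := Nat.cast_nonneg _
    calc (k:ℝ) = ((k:ℝ) ^ (3:ℕ)) ^ ((1:ℝ)/3) := by
          rw [← Real.rpow_natCast (k:ℝ) 3, ← Real.rpow_mul hk0]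
          norm_num
      _ ≤ (L ^ (2:ℕ) * (Fintype.card V : ℝ)) ^ ((1:ℝ)/3) :=
          Real.rpow_le_rpow (pow_nonneg hk0 3) h1 (by norm_num)
      _ = (L ^ (2:ℕ)) ^ ((1:ℝ)/3) * (Fintype.card V : ℝ) ^ ((1:ℝ)/3) :=
          Real.mul_rpow (pow_nonneg hLpos.le 2) (Nat.cast_nonneg _)
      _ = L ^ ((2:ℝ)/3) * (Fintype.card V : ℝ) ^ ((1:ℝ)/3) := by
          rw [← Real.rpow_natCast L 2, ← Real.rpow_mul hLpos.le]
          norm_num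
end
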